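/- Let p be an odd prime, let ℤ[1/p] = {q ∈ ℚ : p^n·q ∈ ℤ for some n ∈ ℕ}, and let O[1/p] be the Hurwitz order over ℤ[1/p] in ℍ[ℚ,−1,−1], i.e., O[1/p] = {w + xi + yj + zk : 2w, 2x, 2y, 2z ∈ ℤ[1/p] and 2w ≡ 2x ≡ 2y ≡ 2z (mod 2ℤ[1/p])}. Let m be a positive integer and d a negative integer, and set N := m²·d. Then every ω ∈ O[1/p] with ω² = N·1 is a pure quaternion ω = x·i + y·j + z·k, and the assignment ω ↦ (x,y,z) is a bijection from {ω ∈ O[1/p] : ω² = N·1} onto {(x,y,z) ∈ ℤ[1/p]³ : x² + y² + z² = −N}. (Via ω = φ(m√d), the first set parametrizes the ℤ[1/p]-algebra embeddings of the quadratic order ℤ[1/p][m√d] into O[1/p], so embeddings correspond to ℤ[1/p]-representations of −m²d by the ternary form X² + Y² + Z².) -/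

import Mathlib

open scoped Quaternion

/-- `zinv p q` says that the rational number `q` belongs to
`ℤ[1/p] = {q ∈ ℚ : p^n·q ∈ ℤ for some n ∈ ℕ}`. -/
def zinv (p : ℕ) (q : ℚ) : Prop :=
  ∃ (n : ℕ) (m : ℤ), (p : ℚ) ^ n * q = (m : ℚ)

/-- Membership in the Hurwitz order over `ℤ[1/p]` inside `ℍ[ℚ,−1,−1]`:
`O[1/p] = {w + xi + yj + zk : 2w, 2x, 2y, 2z ∈ ℤ[1/p], 2w ≡ 2x ≡ 2y ≡ 2z (mod 2ℤ[1/p])}`. -/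
def hurwitzMem (p : ℕ) (α : ℍ[ℚ, -1, -1]) : Prop :=
  zinv p (2 * α.re) ∧ zinv p (2 * α.imI) ∧ zinv p (2 * α.imJ) ∧ zinv p (2 * α.imK) ∧
    zinv p (α.re - α.imI) ∧ zinv p (α.re - α.imJ) ∧ zinv p (α.re - α.imK)

lemma zinv_neg {p : ℕ} {q : ℚ} (h : zinv p q) : zinv p (-q) := by
  obtain ⟨n, m, hm⟩ := h
  exact ⟨n, -m, by push_cast; linarith⟩

lemma zinv_two_mul {p : ℕ} {q : ℚ} (h : zinv p q) : zinv p (2 * q) := by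
  obtain ⟨n, m, hm⟩ := h
  exact ⟨n, 2 * m, by push_cast; linarith⟩

/-- Let `p` be an odd prime, `O[1/p]` the Hurwitz order over `ℤ[1/p]` in
`ℍ[ℚ,−1,−1]`, `m` a positive integer, `d` a negative integer, and `N = m²·d`. Then every
`ω ∈ O[1/p]` with `ω² = N·1` is a pure quaternion `ω = x·i + y·j + z·k`, and `ω ↦ (x,y,z)`
is a bijection from `{ω ∈ O[1/p] : ω² = N·1}` onto
`{(x,y,z) ∈ ℤ[1/p]³ : x² + y² + z² = −N}`; thus embeddings of the quadratic order
`ℤ[1/p][m√d]` into `O[1/p]` correspond to `ℤ[1/p]`-representations of `−m²d` by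
`X² + Y² + Z²`. -/
theorem hurwitz_square_roots_biject_with_ternary_representations
    (p : ℕ) [Fact p.Prime] (hodd : p ≠ 2)
    (m : ℕ) (hm : 0 < m) (d : ℤ) (hd : d < 0) (N : ℤ) (hN : N = (m : ℤ) ^ 2 * d) :
    (∀ ω : ℍ[ℚ, -1, -1], hurwitzMem p ω →
        ω ^ 2 = ((N : ℚ) : ℍ[ℚ, -1, -1]) → ω.re = 0) ∧
    Set.BijOn (fun ω : ℍ[ℚ, -1, -1] => (ω.imI, ω.imJ, ω.imK))
      {ω : ℍ[ℚ, -1, -1] | hurwitzMem p ω ∧ ω ^ 2 = ((N : ℚ) : ℍ[ℚ, -1, -1])}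
      {v : ℚ × ℚ × ℚ | zinv p v.1 ∧ zinv p v.2.1 ∧ zinv p v.2.2 ∧
        v.1 ^ 2 + v.2.1 ^ 2 + v.2.2 ^ 2 = -(N : ℚ)} := by
  have hNneg : (N : ℚ) < 0 := by
    have : N < 0 := by
      rw [hN]
      apply mul_neg_of_pos_of_neg
      · positivity
      · exact hd
    exact_mod_cast this
  -- purity
  have pure : ∀ ω : ℍ[ℚ, -1, -1], ω ^ 2 = ((N : ℚ) : ℍ[ℚ, -1, -1]) →
      ω.re = 0 ∧ ω.imI ^ 2 + ω.imJ ^ 2 + ω.imK ^ 2 = -(N : ℚ) := by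
    intro ω h
    rw [sq, QuaternionAlgebra.ext_iff] at h
    simp [Quaternion.re_mul, Quaternion.imI_mul, Quaternion.imJ_mul,
      Quaternion.imK_mul] at h
    obtain ⟨h1, h2, h3, h4⟩ := h
    have hre : ω.re = 0 := by
      by_contra hre
      have hi : ω.imI = 0 := by
        have h2' : ω.re * ω.imI = 0 := by
          linarith [mul_comm ω.imI ω.re, mul_comm ω.imK ω.imJ]
        rcases mul_eq_zero.mp h2' with h | h
        · exact absurd h hre
        · exact h
      have hj : ω.imJ = 0 := by
        have h3' : ω.re * ω.imJ = 0 := by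
          linarith [mul_comm ω.imJ ω.re, mul_comm ω.imK ω.imI]
        rcases mul_eq_zero.mp h3' with h | h
        · exact absurd h hre
        · exact h
      have hk : ω.imK = 0 := by
        have h4' : ω.re * ω.imK = 0 := by
          linarith [mul_comm ω.imK ω.re, mul_comm ω.imJ ω.imI]
        rcases mul_eq_zero.mp h4' with h | h
        · exact absurd h hre
        · exact h
      rw [hi, hj, hk] at h1
      nlinarith [mul_self_nonneg ω.re]
    refine ⟨hre, ?_⟩
    rw [hre] at h1
    nlinarith
  constructor
  · exact fun ω _ h => (pure ω h).1
  constructor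
  · -- maps to
    rintro ω ⟨⟨_, hx, hy, hz, hrx, hry, hrz⟩, hsq⟩
    obtain ⟨hre, hsum⟩ := pure ω hsq
    rw [hre] at hrx hry hrz
    refine ⟨?_, ?_, ?_, hsum⟩
    · simpa using zinv_neg hrx
    · simpa using zinv_neg hry
    · simpa using zinv_neg hrz
  constructor
  · -- injective
    rintro ω ⟨_, hsq⟩ ω' ⟨_, hsq'⟩ heq
    simp only [Prod.mk.injEq] at heq
    obtain ⟨h1, h2, h3⟩ := heq
    ext
    · rw [(pure ω hsq).1, (pure ω' hsq').1]
    · exact h1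
    · exact h2
    · exact h3
  · -- surjective
    rintro ⟨x, y, z⟩ ⟨hx, hy, hz, hsum⟩
    refine ⟨⟨0, x, y, z⟩, ⟨⟨⟨0, 0, by simp⟩, zinv_two_mul hx, zinv_two_mul hy,
      zinv_two_mul hz, ?_, ?_, ?_⟩, ?_⟩, rfl⟩
    · simpa using zinv_neg hx
    · simpa using zinv_neg hy
    · simpa using zinv_neg hz
    · rw [sq, QuaternionAlgebra.ext_iff]
      simp only [QuaternionAlgebra.re_mul, QuaternionAlgebra.imI_mul,
        QuaternionAlgebra.imJ_mul, QuaternionAlgebra.imK_mul,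
        QuaternionAlgebra.re_coe, QuaternionAlgebra.imI_coe,
        QuaternionAlgebra.imJ_coe, QuaternionAlgebra.imK_coe]
      refine ⟨by nlinarith [hsum], by ring, by ring, by ring⟩
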